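/- Fixed points are first-order critical: Let α ≥ 0 and G ∈ O(d)^{⊗n}. If G is a fixed point of T_α (i.e. G ∈ T_α(G)), then G is a first-order critical point of (QP), i.e. C_iᵀ G = G_i Gᵀ C_i G_i for each i ∈ [n]. -/

import Mathlib

open Matrix BigOperators

noncomputable section
namespace GroupSync

variable {n d : ℕ}

/-- The positive semidefinite square root of a positive semidefinite matrix (the definition
of `Matrix.PosSemidef.sqrt` in the older Mathlib, since removed). -/
def _root_.Matrix.PosSemidef.sqrt {m : Type*} [Fintype m] [DecidableEq m] {A : Matrix m m ℝ}
    (hA : A.PosSemidef) : Matrix m m ℝ :=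
  (hA.1.eigenvectorUnitary : Matrix m m ℝ) * diagonal (Real.sqrt ∘ hA.1.eigenvalues) *
    (star hA.1.eigenvectorUnitary : Matrix m m ℝ)

/-- `Aᵀ * A` is Hermitian (the older Mathlib lemma, since removed). -/
theorem _root_.Matrix.isHermitian_transpose_mul_self {m k : Type*} [Fintype m]
    (A : Matrix m k ℝ) : (Aᵀ * A).IsHermitian := by
  simpa using Matrix.isHermitian_conjTranspose_mul_self A

/-- Frobenius norm of a real matrix. -/
def frob {m k : Type*} [Fintype m] [Fintype k] (X : Matrix m k ℝ) : ℝ :=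
  Real.sqrt (∑ i, ∑ j, (X i j) ^ 2)

/-- Spectral (operator) norm of a real matrix: the operator norm of the induced
linear map between Euclidean spaces. -/
def spec {m k : Type*} [Fintype m] [Fintype k] [DecidableEq k] (X : Matrix m k ℝ) : ℝ :=
  ‖LinearMap.toContinuousLinearMap (Matrix.toEuclideanLin X)‖

/-- Nuclear norm: trace of the positive semidefinite square root of `X * Xᵀ`
(i.e. the sum of the singular values of `X`). -/
def nuclear {m k : Type*} [Fintype m] [Fintype k] [DecidableEq m] (X : Matrix m k ℝ) : ℝ :=
  (Matrix.posSemidef_self_mul_conjTranspose X).sqrt.trace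

/-- The positive semidefinite square root of `X * Xᵀ`. -/
def psdSqrtMulT {m k : Type*} [Fintype m] [Fintype k] [DecidableEq m] (X : Matrix m k ℝ) :
    Matrix m m ℝ :=
  (Matrix.posSemidef_self_mul_conjTranspose X).sqrt

/-- Membership in the orthogonal group `O(d)`. -/
def IsOd (g : Matrix (Fin d) (Fin d) ℝ) : Prop :=
  gᵀ * g = 1 ∧ g * gᵀ = 1

/-- Membership in the special orthogonal group `SO(d)`. -/
def IsSOd (g : Matrix (Fin d) (Fin d) ℝ) : Prop :=
  IsOd g ∧ g.det = 1

/-- The `i`-th `d × d` block of an `nd × d` matrix. -/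
def blk (X : Matrix (Fin n × Fin d) (Fin d) ℝ) (i : Fin n) : Matrix (Fin d) (Fin d) ℝ :=
  Matrix.of fun a b => X (i, a) b

/-- Membership in `O(d)^{⊗n}`: every `d × d` block is orthogonal. -/
def OdN (G : Matrix (Fin n × Fin d) (Fin d) ℝ) : Prop :=
  ∀ i : Fin n, IsOd (blk G i)

/-- Membership in `SO(d)^{⊗n}`. -/
def SOdN (G : Matrix (Fin n × Fin d) (Fin d) ℝ) : Prop :=
  ∀ i : Fin n, IsSOd (blk G i)

/-- The `i`-th block column (an `nd × d` matrix) of an `nd × nd` matrix. -/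
def bcol (M : Matrix (Fin n × Fin d) (Fin n × Fin d) ℝ) (i : Fin n) :
    Matrix (Fin n × Fin d) (Fin d) ℝ :=
  Matrix.of fun p b => M p (i, b)

/-- The `ij`-th `d × d` block of an `nd × nd` matrix. -/
def dblk (M : Matrix (Fin n × Fin d) (Fin n × Fin d) ℝ) (i j : Fin n) :
    Matrix (Fin d) (Fin d) ℝ :=
  Matrix.of fun a b => M (i, a) (j, b)

/-- `G' ∈ T_α(G)` (where `Ct = C + α I`): `G' ∈ O(d)^{⊗n}` and each block `G'_i` is a
nearest point of `C̃ᵢᵀ G` in `O(d)` w.r.t. the Frobenius norm. -/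
def InT (Ct : Matrix (Fin n × Fin d) (Fin n × Fin d) ℝ)
    (G G' : Matrix (Fin n × Fin d) (Fin d) ℝ) : Prop :=
  OdN G' ∧ ∀ i : Fin n, ∀ X : Matrix (Fin d) (Fin d) ℝ, IsOd X →
    frob (blk G' i - (bcol Ct i)ᵀ * G) ≤ frob (X - (bcol Ct i)ᵀ * G)

/-- `G' ∈ ST_α(G)`: the `SO(d)` analogue of `InT`. -/
def InST (Ct : Matrix (Fin n × Fin d) (Fin n × Fin d) ℝ)
    (G G' : Matrix (Fin n × Fin d) (Fin d) ℝ) : Prop :=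
  SOdN G' ∧ ∀ i : Fin n, ∀ X : Matrix (Fin d) (Fin d) ℝ, IsSOd X →
    frob (blk G' i - (bcol Ct i)ᵀ * G) ≤ frob (X - (bcol Ct i)ᵀ * G)

/-- The quotient distance `d(X, Y) = min_{g ∈ O(d)} ‖X − Y g‖_F`. -/
def dOrth (X Y : Matrix (Fin n × Fin d) (Fin d) ℝ) : ℝ :=
  ⨅ g : {g : Matrix (Fin d) (Fin d) ℝ // IsOd g}, frob (X - Y * g.1)

/-- The objective function `f(G) = tr(Gᵀ C G)`. -/
def obj (C : Matrix (Fin n × Fin d) (Fin n × Fin d) ℝ)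
    (G : Matrix (Fin n × Fin d) (Fin d) ℝ) : ℝ :=
  Matrix.trace (Gᵀ * C * G)

/-- Hadamard (entrywise) product. -/
def had {m k : Type*} (X Y : Matrix m k ℝ) : Matrix m k ℝ :=
  Matrix.of fun p q => X p q * Y p q

/-- `W ⊗ (1_d 1_dᵀ)`, the Kronecker product of `W` with the all-ones `d × d` matrix. -/
def kron1 (W : Matrix (Fin n) (Fin n) ℝ) : Matrix (Fin n × Fin d) (Fin n × Fin d) ℝ :=
  Matrix.kroneckerMap (· * ·) W (Matrix.of fun (_ _ : Fin d) => (1 : ℝ))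

/-- The all-ones matrix `1_m 1_mᵀ`. -/
def onesMat (m : Type*) : Matrix m m ℝ :=
  Matrix.of fun _ _ => (1 : ℝ)

/-- `symblockdiag`: symmetrize the diagonal `d × d` blocks, zero out all other blocks. -/
def sbd (X : Matrix (Fin n × Fin d) (Fin n × Fin d) ℝ) :
    Matrix (Fin n × Fin d) (Fin n × Fin d) ℝ :=
  Matrix.of fun p q => if p.1 = q.1 then (X p q + X (p.1, q.2) (q.1, p.2)) / 2 else 0

/-- `S(G) = symblockdiag(C G Gᵀ) − C`. -/
def Smat (C : Matrix (Fin n × Fin d) (Fin n × Fin d) ℝ)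
    (G : Matrix (Fin n × Fin d) (Fin d) ℝ) : Matrix (Fin n × Fin d) (Fin n × Fin d) ℝ :=
  sbd (C * (G * Gᵀ)) - C

/-- `G` is a second-order critical point of (QP): `S(G) G = 0` and
`⟨H, S(G) H⟩ ≥ 0` for all tangent directions `H` (blockwise `Hᵢ Gᵢᵀ` skew-symmetric). -/
def IsSOC (C : Matrix (Fin n × Fin d) (Fin n × Fin d) ℝ)
    (G : Matrix (Fin n × Fin d) (Fin d) ℝ) : Prop :=
  Smat C G * G = 0 ∧
  ∀ H : Matrix (Fin n × Fin d) (Fin d) ℝ,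
    (∀ i : Fin n, (blk H i * (blk G i)ᵀ)ᵀ = -(blk H i * (blk G i)ᵀ)) →
    0 ≤ Matrix.trace (Hᵀ * (Smat C G * H))

/-- Smallest singular value of a square matrix, as the minimum of `‖M v‖` over
unit vectors `v`. -/
def sigmaMin (M : Matrix (Fin d) (Fin d) ℝ) : ℝ :=
  ⨅ v : {v : Fin d → ℝ // ∑ a, (v a) ^ 2 = 1}, Real.sqrt (∑ a, (M.mulVec v.1 a) ^ 2)

/-- The singular values of a square matrix: square roots of the eigenvalues of `Mᵀ M`. -/
def singVal (M : Matrix (Fin d) (Fin d) ℝ) (l : Fin d) : ℝ :=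
  Real.sqrt ((Matrix.isHermitian_transpose_mul_self M).eigenvalues l)

/-- Smallest eigenvalue of a (symmetric) matrix, as the minimum Rayleigh quotient
over unit vectors. -/
def lambdaMin {m : Type*} [Fintype m] (M : Matrix m m ℝ) : ℝ :=
  ⨅ v : {v : m → ℝ // ∑ i, (v i) ^ 2 = 1}, v.1 ⬝ᵥ M.mulVec v.1

/-- `D_α(G)`: block diagonal of the psd square roots of `(C̃ᵢᵀ G)(C̃ᵢᵀ G)ᵀ`, minus `C̃`. -/
def Dmat (Ct : Matrix (Fin n × Fin d) (Fin n × Fin d) ℝ)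
    (G : Matrix (Fin n × Fin d) (Fin d) ℝ) : Matrix (Fin n × Fin d) (Fin n × Fin d) ℝ :=
  (Matrix.of fun p q =>
    if p.1 = q.1 then psdSqrtMulT ((bcol Ct p.1)ᵀ * G) p.2 q.2 else 0) - Ct

/-- The residual function `ρ_α(G) = ‖D_α(G) G‖_F`. -/
def rho (Ct : Matrix (Fin n × Fin d) (Fin n × Fin d) ℝ)
    (G : Matrix (Fin n × Fin d) (Fin d) ℝ) : ℝ :=
  frob (Dmat Ct G * G)

/-- Blockwise infinity norm: `‖X‖_∞ = max_i ‖X_i‖` (spectral norm of the blocks). -/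
def binf (X : Matrix (Fin n × Fin d) (Fin d) ℝ) : ℝ :=
  ⨆ i : Fin n, spec (blk X i)


private lemma trace_stdBasis_mul {d : ℕ} (a b : Fin d) (N : Matrix (Fin d) (Fin d) ℝ) :
    Matrix.trace (Matrix.single a b (1:ℝ) * N) = N b a := by
  classical
  rw [Matrix.trace]
  rw [Finset.sum_eq_single a]
  · simp [Matrix.diag]
  · intro p _ hp
    simp [Matrix.diag, Matrix.single_mul_apply_of_ne (1:ℝ) a b p p hp N]
  · simp

private lemma stdBasis_transpose {d : ℕ} (a b : Fin d) :
    (Matrix.single a b (1:ℝ))ᵀ = Matrix.single b a 1 := by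
  ext p q
  simp [Matrix.single, and_comm]

set_option maxHeartbeats 2000000 in
private lemma symm_of_trace_max {d : ℕ} (N : Matrix (Fin d) (Fin d) ℝ)
    (h : ∀ Q : Matrix (Fin d) (Fin d) ℝ, IsOd Q → Matrix.trace (Qᵀ * N) ≤ Matrix.trace N) :
    Nᵀ = N := by
  classical
  ext b a
  simp only [Matrix.transpose_apply]
  by_cases hab : a = b
  · subst hab; rfl
  -- we show s := N a b - N b a is zero
  by_contra hne
  set c : ℝ := N a a + N b b with hc
  set s : ℝ := N a b - N b a with hs
  have hs0 : s ≠ 0 := sub_ne_zero.mpr hne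
  have hs2 : 0 < s ^ 2 := by positivity
  have hcs : 0 ≤ c ^ 2 + s ^ 2 := by positivity
  set r : ℝ := Real.sqrt (c ^ 2 + s ^ 2) with hrdef
  have hr : 0 < r := Real.sqrt_pos.2 (by positivity)
  have hr2 : r ^ 2 = c ^ 2 + s ^ 2 := Real.sq_sqrt hcs
  set x : ℝ := c / r with hx
  set y : ℝ := -(s / r) with hy
  have hxy : x ^ 2 + y ^ 2 = 1 := by
    rw [hx, hy]
    field_simp
    linarith [hr2]
  set P : Matrix (Fin d) (Fin d) ℝ :=
    Matrix.single a a 1 + Matrix.single b b 1 with hP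
  set K : Matrix (Fin d) (Fin d) ℝ :=
    Matrix.single b a 1 - Matrix.single a b 1 with hK
  have hab' : b ≠ a := fun e => hab e.symm
  have hPP : P * P = P := by
    rw [hP]
    simp [add_mul, mul_add, Matrix.single_mul_single_same,
      Matrix.single_mul_single_of_ne (1:ℝ) a a b hab (1:ℝ),
      Matrix.single_mul_single_of_ne (1:ℝ) b b a hab' (1:ℝ)]
  have hKK : K * K = -P := by
    rw [hK, hP]
    simp only [sub_mul, mul_sub, Matrix.single_mul_single_same,
      Matrix.single_mul_single_of_ne (1:ℝ) b a b hab (1:ℝ),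
      Matrix.single_mul_single_of_ne (1:ℝ) a b a hab' (1:ℝ), one_mul]
    abel
  have hPK : P * K = K := by
    rw [hP, hK]
    simp only [add_mul, mul_sub, Matrix.single_mul_single_same,
      Matrix.single_mul_single_of_ne (1:ℝ) a a b hab (1:ℝ),
      Matrix.single_mul_single_of_ne (1:ℝ) b b a hab' (1:ℝ), one_mul]
    abel
  have hKP : K * P = K := by
    rw [hP, hK]
    simp only [sub_mul, mul_add, Matrix.single_mul_single_same,
      Matrix.single_mul_single_of_ne (1:ℝ) b a b hab (1:ℝ),
      Matrix.single_mul_single_of_ne (1:ℝ) a b a hab' (1:ℝ), one_mul]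
    abel
  have hPt : Pᵀ = P := by
    rw [hP, Matrix.transpose_add, stdBasis_transpose, stdBasis_transpose, add_comm]
  have hKt : Kᵀ = -K := by
    rw [hK, Matrix.transpose_sub, stdBasis_transpose, stdBasis_transpose]
    abel
  set Q : Matrix (Fin d) (Fin d) ℝ := 1 + (x - 1) • P + y • K with hQ
  have hQt : Qᵀ = 1 + (x - 1) • P + (-y) • K := by
    rw [hQ]
    simp [Matrix.transpose_add, Matrix.transpose_smul, hPt, hKt, smul_neg, neg_smul]
  have hprod : ∀ v w : ℝ, (1 + (x - 1) • P + v • K) * (1 + (x - 1) • P + w • K) =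
      1 + ((x - 1) + (x - 1) + (x - 1) * (x - 1) - v * w) • P
        + (v + w + (x - 1) * w + v * (x - 1)) • K := by
    intro v w
    simp only [mul_add, add_mul, one_mul, mul_one, Matrix.smul_mul, Matrix.mul_smul,
      hPP, hKK, hPK, hKP, smul_smul, smul_neg]
    module
  have hcoefP : (x - 1) + (x - 1) + (x - 1) * (x - 1) - (-y) * y = 0 := by nlinarith [hxy]
  have hcoefP' : (x - 1) + (x - 1) + (x - 1) * (x - 1) - y * (-y) = 0 := by nlinarith [hxy]
  have hcoefK : (-y) + y + (x - 1) * y + (-y) * (x - 1) = 0 := by ring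
  have hcoefK' : y + (-y) + (x - 1) * (-y) + y * (x - 1) = 0 := by ring
  have hQod : IsOd Q := by
    constructor
    · rw [hQt, hQ, hprod, hcoefP, hcoefK]; simp
    · rw [hQt, hQ, hprod, hcoefP', hcoefK']; simp
  have htrP : Matrix.trace (P * N) = c := by
    rw [hP, Matrix.add_mul, Matrix.trace_add, trace_stdBasis_mul, trace_stdBasis_mul, hc]
  have htrK : Matrix.trace (K * N) = s := by
    rw [hK, Matrix.sub_mul, Matrix.trace_sub, trace_stdBasis_mul, trace_stdBasis_mul, hs]
  have htrQ : Matrix.trace (Qᵀ * N) = Matrix.trace N + (x - 1) * c + (-y) * s := by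
    rw [hQt, Matrix.add_mul, Matrix.add_mul, one_mul, Matrix.smul_mul, Matrix.smul_mul,
      Matrix.trace_add, Matrix.trace_add, Matrix.trace_smul, Matrix.trace_smul, htrP, htrK]
    simp [smul_eq_mul]
  have hineq := h Q hQod
  rw [htrQ] at hineq
  have hineq2 : (x - 1) * c + (-y) * s ≤ 0 := by linarith
  have hys : -y = s / r := by rw [hy]; ring
  have heq : (x - 1) * c + (-y) * s = r - c := by
    rw [hys, hx]
    have h3 : (c / r - 1) * c + (s / r) * s = (c ^ 2 + s ^ 2) / r - c := by
      field_simp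
      ring
    have h4 : (c ^ 2 + s ^ 2) / r = r := by
      rw [← hr2, sq, mul_div_assoc, div_self hr.ne', mul_one]
    rw [h3, h4]
  have hcr : c ≤ r := by
    calc c ≤ |c| := le_abs_self c
      _ = Real.sqrt (c ^ 2) := (Real.sqrt_sq_eq_abs c).symm
      _ ≤ r := by
          rw [hrdef]
          exact Real.sqrt_le_sqrt (by nlinarith)
  have hrc : r = c := le_antisymm (by linarith [heq ▸ hineq2]) hcr
  rw [hrc] at hr2
  nlinarith [hs2, hr2]

private lemma inner_max {d : ℕ} (B Gi : Matrix (Fin d) (Fin d) ℝ) (hGi : IsOd Gi)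
    (hmin : ∀ X : Matrix (Fin d) (Fin d) ℝ, IsOd X → frob (Gi - B) ≤ frob (X - B)) :
    ∀ Q : Matrix (Fin d) (Fin d) ℝ, IsOd Q →
      Matrix.trace (Qᵀ * (B * Giᵀ)) ≤ Matrix.trace (B * Giᵀ) := by
  classical
  have expand : ∀ Y : Matrix (Fin d) (Fin d) ℝ,
      (∑ p, ∑ q, ((Y - B) p q) ^ 2)
        = (∑ p, ∑ q, (Y p q) ^ 2) - 2 * (∑ p, ∑ q, Y p q * B p q)
          + (∑ p, ∑ q, (B p q) ^ 2) := by
    intro Y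
    rw [Finset.mul_sum, ← Finset.sum_sub_distrib, ← Finset.sum_add_distrib]
    refine Finset.sum_congr rfl fun p _ => ?_
    rw [Finset.mul_sum, ← Finset.sum_sub_distrib, ← Finset.sum_add_distrib]
    refine Finset.sum_congr rfl fun q _ => ?_
    simp only [Matrix.sub_apply]
    ring
  have hd : ∀ Y : Matrix (Fin d) (Fin d) ℝ, IsOd Y →
      (∑ p, ∑ q, (Y p q) ^ 2) = (d : ℝ) := by
    intro Y hY
    rw [Finset.sum_comm]
    calc ∑ q, ∑ p, (Y p q) ^ 2 = ∑ q : Fin d, (Yᵀ * Y) q q := by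
          refine Finset.sum_congr rfl fun q _ => ?_
          simp [Matrix.mul_apply, Matrix.transpose_apply, sq]
      _ = (d : ℝ) := by rw [hY.1]; simp [Matrix.one_apply]
  have tr_eq : ∀ Y : Matrix (Fin d) (Fin d) ℝ,
      Matrix.trace (Yᵀ * B) = ∑ p, ∑ q, Y p q * B p q := by
    intro Y
    have h1 : Matrix.trace (Yᵀ * B) = ∑ q, ∑ p, Y p q * B p q := by
      simp [Matrix.trace, Matrix.diag, Matrix.mul_apply, Matrix.transpose_apply]
    rw [h1, Finset.sum_comm]
  intro Q hQ
  set X : Matrix (Fin d) (Fin d) ℝ := Q * Gi with hX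
  have hXod : IsOd X := by
    constructor
    · rw [hX, Matrix.transpose_mul, Matrix.mul_assoc, ← Matrix.mul_assoc Qᵀ, hQ.1,
        one_mul, hGi.1]
    · rw [hX, Matrix.transpose_mul, Matrix.mul_assoc, ← Matrix.mul_assoc Gi, hGi.2,
        one_mul, hQ.2]
  have hf := hmin X hXod
  have ha : (0:ℝ) ≤ ∑ p, ∑ q, ((Gi - B) p q) ^ 2 := by positivity
  have hb : (0:ℝ) ≤ ∑ p, ∑ q, ((X - B) p q) ^ 2 := by positivity
  have h1 : (∑ p, ∑ q, ((Gi - B) p q) ^ 2) ≤ ∑ p, ∑ q, ((X - B) p q) ^ 2 :=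
    (Real.sqrt_le_sqrt_iff hb).1 hf
  rw [expand Gi, expand X, hd Gi hGi, hd X hXod] at h1
  have h2 : (∑ p, ∑ q, X p q * B p q) ≤ ∑ p, ∑ q, Gi p q * B p q := by linarith
  rw [← tr_eq, ← tr_eq] at h2
  have e1 : Matrix.trace (Qᵀ * (B * Giᵀ)) = Matrix.trace (Xᵀ * B) := by
    rw [hX, Matrix.transpose_mul, Matrix.mul_assoc, ← Matrix.mul_assoc Qᵀ,
      Matrix.trace_mul_comm]
  have e2 : Matrix.trace (B * Giᵀ) = Matrix.trace (Giᵀ * B) := Matrix.trace_mul_comm _ _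
  rw [e1, e2]
  exact h2


private lemma crit_core {d : ℕ} (B Gi : Matrix (Fin d) (Fin d) ℝ) (hGi : IsOd Gi)
    (hmin : ∀ X : Matrix (Fin d) (Fin d) ℝ, IsOd X → frob (Gi - B) ≤ frob (X - B)) :
    B = Gi * Bᵀ * Gi := by
  have htr := inner_max B Gi hGi hmin
  have hNsymm : (B * Giᵀ)ᵀ = B * Giᵀ := symm_of_trace_max _ htr
  calc B = B * (Giᵀ * Gi) := by rw [hGi.1, mul_one]
    _ = (B * Giᵀ) * Gi := by rw [Matrix.mul_assoc]
    _ = (B * Giᵀ)ᵀ * Gi := by rw [hNsymm]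
    _ = Gi * Bᵀ * Gi := by rw [Matrix.transpose_mul, Matrix.transpose_transpose]

/-- fixed points are first-order critical.
For `α ≥ 0`, `C` symmetric and `G ∈ O(d)^{⊗n}` with `C̃ = C + α I`:
if `G ∈ T_α(G)`, then `G` is a first-order critical point of (QP),
i.e. `Cᵢᵀ G = Gᵢ Gᵀ Cᵢ Gᵢ` for all `i`. -/
theorem fixed_point_is_first_order_critical {n d : ℕ}
    (C : Matrix (Fin n × Fin d) (Fin n × Fin d) ℝ) (hCsymm : Cᵀ = C)
    (α : ℝ) (hα : 0 ≤ α)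
    (Ct : Matrix (Fin n × Fin d) (Fin n × Fin d) ℝ)
    (hCt : Ct = C + α • (1 : Matrix (Fin n × Fin d) (Fin n × Fin d) ℝ))
    (G : Matrix (Fin n × Fin d) (Fin d) ℝ) (hG : OdN G)
    (hfix : InT Ct G G) :
    ∀ i : Fin n, (bcol C i)ᵀ * G = blk G i * (Gᵀ * bcol C i) * blk G i := by
  intro i
  obtain ⟨hOd', hmin⟩ := hfix
  have hGi : IsOd (blk G i) := hG i
  have hB2 : (bcol Ct i)ᵀ * G = blk G i * ((bcol Ct i)ᵀ * G)ᵀ * blk G i :=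
    crit_core ((bcol Ct i)ᵀ * G) (blk G i) hGi (fun X hX => hmin i X hX)
  have hsplit : (bcol Ct i)ᵀ * G = (bcol C i)ᵀ * G + α • blk G i := by
    ext c b
    simp [hCt, Matrix.mul_apply, Matrix.add_apply, Matrix.one_apply, bcol, blk,
      add_mul, ite_mul, mul_ite, mul_zero, mul_one, zero_mul,
      Finset.sum_add_distrib, Finset.mul_sum]
  have hAT : Gᵀ * bcol C i = ((bcol C i)ᵀ * G)ᵀ := by
    rw [Matrix.transpose_mul, Matrix.transpose_transpose]
  rw [hAT]
  rw [hsplit] at hB2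
  have hexp : (bcol C i)ᵀ * G + α • blk G i
      = blk G i * ((bcol C i)ᵀ * G)ᵀ * blk G i + α • blk G i := by
    calc (bcol C i)ᵀ * G + α • blk G i
        = blk G i * ((bcol C i)ᵀ * G + α • blk G i)ᵀ * blk G i := hB2
      _ = blk G i * (((bcol C i)ᵀ * G)ᵀ + α • (blk G i)ᵀ) * blk G i := by
          rw [Matrix.transpose_add, Matrix.transpose_smul]
      _ = blk G i * ((bcol C i)ᵀ * G)ᵀ * blk G i + α • blk G i := by
          rw [Matrix.mul_add, Matrix.add_mul, Matrix.mul_smul, Matrix.smul_mul, hGi.2, one_mul]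
  exact add_right_cancel hexp
end GroupSync
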